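/- Let γ > 4, ψ(x) = x^{-1/(γ-1)} on (0,1], g(x) = ∫₀¹ ψ(b)(1 − exp(−x ψ(b))) db, θ_c = 1/∫₀¹ ψ(x)² dx, and for θ > θ_c let A_θ be the unique positive solution of A = θ g(A). Then as θ ↓ θ_c, A_θ ∼ (2 ∫₀¹ ψ(x)² dx) / (θ_c ∫₀¹ ψ(x)³ dx) · (θ − θ_c); in particular A_θ / (θ − θ_c) converges to a finite positive constant. -/

import Mathlib

open MeasureTheory Filter Set

private lemma nonneg_of_deriv' (f f' : ℝ → ℝ) (hf : ∀ t, HasDerivAt f (f' t) t)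
    (h0 : f 0 = 0) (hd : ∀ t, 0 ≤ t → 0 ≤ f' t) : ∀ t, 0 ≤ t → 0 ≤ f t := by
  intro t ht
  have hmono : MonotoneOn f (Ici (0:ℝ)) := by
    apply monotoneOn_of_deriv_nonneg (convex_Ici 0)
    · exact fun x _ => (hf x).continuousAt.continuousWithinAt
    · exact fun x _ => (hf x).differentiableAt.differentiableWithinAt
    · intro x hx
      rw [interior_Ici] at hx
      rw [(hf x).deriv]
      exact hd x hx.le
  have := hmono (self_mem_Ici) ht ht
  rwa [h0] at this

private lemma hasDerivAt_expneg (t : ℝ) :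
    HasDerivAt (fun t : ℝ => Real.exp (-t)) (-Real.exp (-t)) t := by
  simpa [Function.comp_def] using (Real.hasDerivAt_exp (-t)).comp t ((hasDerivAt_id t).neg)

private lemma exp_quad : ∀ t : ℝ, 0 ≤ t → Real.exp (-t) ≤ 1 - t + t^2/2 := by
  intro t ht
  have := nonneg_of_deriv' (fun t => 1 - t + t^2/2 - Real.exp (-t))
    (fun t => -1 + t + Real.exp (-t)) ?_ (by norm_num) ?_ t ht
  · linarith
  · intro t
    have h2 : HasDerivAt (fun t : ℝ => 1 - t + t^2/2) (-1 + t) t := by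
      have h := ((hasDerivAt_id t).const_sub 1).add (((hasDerivAt_id t).pow 2).div_const 2)
      simp only [id_eq] at h
      exact h.congr_deriv (by push_cast; ring)
    have := h2.sub (hasDerivAt_expneg t)
    exact this.congr_deriv (by ring)
  · intro t ht
    have := Real.add_one_le_exp (-t)
    linarith

private lemma exp_cubic : ∀ t : ℝ, 0 ≤ t → 1 - t + t^2/2 - t^3/6 ≤ Real.exp (-t) := by
  intro t ht
  have := nonneg_of_deriv' (fun t => Real.exp (-t) - (1 - t + t^2/2 - t^3/6))
    (fun t => -Real.exp (-t) + (1 - t + t^2/2)) ?_ (by norm_num) ?_ t ht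
  · linarith
  · intro t
    have h2 : HasDerivAt (fun t : ℝ => 1 - t + t^2/2 - t^3/6) (-1 + t - t^2/2) t := by
      have h := (((hasDerivAt_id t).const_sub 1).add (((hasDerivAt_id t).pow 2).div_const 2)).sub
        (((hasDerivAt_id t).pow 3).div_const 6)
      simp only [id_eq] at h
      exact h.congr_deriv (by push_cast; ring)
    have := (hasDerivAt_expneg t).sub h2
    exact this.congr_deriv (by ring)
  · intro t ht
    have := exp_quad t ht
    linarith

private lemma one_sub_exp_le (t : ℝ) : 1 - Real.exp (-t) ≤ t := by
  have := Real.add_one_le_exp (-t); linarith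

private lemma one_sub_exp_lt (t : ℝ) (ht : 0 < t) : 1 - Real.exp (-t) < t := by
  have := Real.add_one_lt_exp (x := -t) (by linarith); linarith

private lemma scaled_concave (c t : ℝ) (hc : 0 ≤ c) (hc1 : c ≤ 1) :
    c * (1 - Real.exp (-t)) ≤ 1 - Real.exp (-(c*t)) := by
  have h1c : (0:ℝ) ≤ 1 - c := by linarith
  have := convexOn_exp.2 (mem_univ (-t)) (mem_univ (0:ℝ)) hc h1c (by ring)
  simp only [smul_eq_mul, mul_zero, add_zero, Real.exp_zero, mul_one] at this
  have h2 : c * -t = -(c*t) := by ring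
  rw [h2] at this
  linarith

noncomputable def Gnu (ψ : ℝ → ℝ) (x : ℝ) : ℝ :=
  ∫ b in Ioc (0:ℝ) 1, ψ b * (1 - Real.exp (-x * ψ b))

noncomputable def Phinu (ψ : ℝ → ℝ) (x : ℝ) : ℝ :=
  ∫ b in Ioc (0:ℝ) 1, ψ b * (1 - Real.exp (-x * ψ b) - x * ψ b) / x ^ 2

private lemma integrandG_integrable (ψ : ℝ → ℝ) (hmeas : Measurable ψ)
    (hpos : ∀ b ∈ Ioc (0:ℝ) 1, 0 < ψ b)
    (hint2 : IntegrableOn (fun b => ψ b ^ 2) (Ioc (0:ℝ) 1))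
    (x : ℝ) (hx : 0 ≤ x) :
    IntegrableOn (fun b => ψ b * (1 - Real.exp (-x * ψ b))) (Ioc (0:ℝ) 1) := by
  apply Integrable.mono' (hint2.const_mul x)
  · apply Measurable.aestronglyMeasurable
    fun_prop
  · filter_upwards [ae_restrict_mem measurableSet_Ioc] with b hb
    have hψ := (hpos b hb).le
    have h1 : 0 ≤ 1 - Real.exp (-x * ψ b) := by
      have : Real.exp (-x * ψ b) ≤ 1 := by
        rw [Real.exp_le_one_iff]
        nlinarith
      linarith
    have h2 : 1 - Real.exp (-x * ψ b) ≤ x * ψ b := by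
      have := one_sub_exp_le (x * ψ b); rw [neg_mul]; linarith
    rw [Real.norm_eq_abs, abs_of_nonneg (by positivity)]
    nlinarith

private lemma G_mono (ψ : ℝ → ℝ) (hmeas : Measurable ψ)
    (hpos : ∀ b ∈ Ioc (0:ℝ) 1, 0 < ψ b)
    (hint2 : IntegrableOn (fun b => ψ b ^ 2) (Ioc (0:ℝ) 1))
    (x y : ℝ) (hx : 0 < x) (hxy : x ≤ y) :
    x * Gnu ψ y ≤ y * Gnu ψ x := by
  have hy : 0 < y := lt_of_lt_of_le hx hxy
  rw [Gnu, Gnu, ← integral_const_mul, ← integral_const_mul]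
  apply setIntegral_mono_on
  · exact (integrandG_integrable ψ hmeas hpos hint2 y hy.le).const_mul x
  · exact (integrandG_integrable ψ hmeas hpos hint2 x hx.le).const_mul y
  · exact measurableSet_Ioc
  · intro b hb
    have hψ := (hpos b hb).le
    have key := scaled_concave (x/y) (y * ψ b) (by positivity) ((div_le_one hy).mpr hxy)
    have hc : x / y * (y * ψ b) = x * ψ b := by field_simp
    rw [hc] at key
    have h2 : 0 ≤ y * ψ b := by positivity
    calc x * (ψ b * (1 - Real.exp (-y * ψ b)))
        = (y * ψ b) * (x/y * (1 - Real.exp (-(y * ψ b)))) := by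
          rw [neg_mul]; field_simp
      _ ≤ (y * ψ b) * (1 - Real.exp (-(x * ψ b))) := by
          apply mul_le_mul_of_nonneg_left key h2
      _ = y * (ψ b * (1 - Real.exp (-x * ψ b))) := by rw [neg_mul]; ring

private lemma G_lt_gap (ψ : ℝ → ℝ) (hmeas : Measurable ψ)
    (hpos : ∀ b ∈ Ioc (0:ℝ) 1, 0 < ψ b)
    (hint2 : IntegrableOn (fun b => ψ b ^ 2) (Ioc (0:ℝ) 1))
    (ε : ℝ) (hε : 0 < ε) :
    Gnu ψ ε < ε * (∫ b in Ioc (0:ℝ) 1, ψ b ^ 2) := by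
  have hdiff : 0 < ∫ b in Ioc (0:ℝ) 1, (ε * ψ b ^ 2 - ψ b * (1 - Real.exp (-ε * ψ b))) := by
    set f : ℝ → ℝ := fun b => ε * ψ b ^ 2 - ψ b * (1 - Real.exp (-ε * ψ b)) with hf
    have hfint : IntegrableOn f (Ioc (0:ℝ) 1) :=
      (hint2.const_mul ε).sub (integrandG_integrable ψ hmeas hpos hint2 ε hε.le)
    have hfpos : ∀ b ∈ Ioc (0:ℝ) 1, 0 < f b := by
      intro b hb
      have hψ := hpos b hb
      have := one_sub_exp_lt (ε * ψ b) (by positivity)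
      rw [hf]
      simp only [neg_mul]
      nlinarith
    rw [setIntegral_pos_iff_support_of_nonneg_ae]
    · have hsub : Ioc (0:ℝ) 1 ⊆ Function.support f ∩ Ioc 0 1 :=
        fun b hb => ⟨ne_of_gt (hfpos b hb), hb⟩
      calc (0:ENNReal) < 1 := by norm_num
        _ = volume (Ioc (0:ℝ) 1) := by simp
        _ ≤ volume (Function.support f ∩ Ioc 0 1) := measure_mono hsub
    · filter_upwards [ae_restrict_mem measurableSet_Ioc] with b hb
      exact (hfpos b hb).le
    · exact hfint
  have heq : ∫ b in Ioc (0:ℝ) 1, (ε * ψ b ^ 2 - ψ b * (1 - Real.exp (-ε * ψ b)))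
      = ε * (∫ b in Ioc (0:ℝ) 1, ψ b ^ 2) - Gnu ψ ε := by
    rw [integral_sub (hint2.const_mul ε) (integrandG_integrable ψ hmeas hpos hint2 ε hε.le),
      integral_const_mul, Gnu]
  rw [heq] at hdiff
  linarith

private lemma Phi_identity (ψ : ℝ → ℝ) (hmeas : Measurable ψ)
    (hpos : ∀ b ∈ Ioc (0:ℝ) 1, 0 < ψ b)
    (hint2 : IntegrableOn (fun b => ψ b ^ 2) (Ioc (0:ℝ) 1))
    (x : ℝ) (hx : 0 < x) :
    x ^ 2 * Phinu ψ x = Gnu ψ x - x * (∫ b in Ioc (0:ℝ) 1, ψ b ^ 2) := by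
  have h1 : Phinu ψ x
      = ∫ b in Ioc (0:ℝ) 1, (ψ b * (1 - Real.exp (-x * ψ b)) - x * ψ b ^ 2) / x ^ 2 := by
    rw [Phinu]
    apply setIntegral_congr_fun measurableSet_Ioc
    intro b _
    ring
  rw [h1, integral_div,
    integral_sub (integrandG_integrable ψ hmeas hpos hint2 x hx.le) (hint2.const_mul x),
    integral_const_mul]
  rw [← Gnu]
  field_simp

private lemma Phi_tendsto (ψ : ℝ → ℝ) (hmeas : Measurable ψ)
    (hpos : ∀ b ∈ Ioc (0:ℝ) 1, 0 < ψ b)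
    (hint3 : IntegrableOn (fun b => ψ b ^ 3) (Ioc (0:ℝ) 1)) :
    Tendsto (Phinu ψ) (nhdsWithin 0 (Ioi 0))
      (nhds (∫ b in Ioc (0:ℝ) 1, -(ψ b ^ 3) / 2)) := by
  apply tendsto_integral_filter_of_dominated_convergence (fun b => ψ b ^ 3 / 2)
  · filter_upwards with x
    apply Measurable.aestronglyMeasurable
    fun_prop
  · filter_upwards [self_mem_nhdsWithin] with x hx
    have hx0 : (0:ℝ) < x := hx
    filter_upwards [ae_restrict_mem measurableSet_Ioc] with b hb
    have hψ := (hpos b hb).le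
    have ht : 0 ≤ x * ψ b := by positivity
    have habs : |1 - Real.exp (-(x * ψ b)) - x * ψ b| ≤ (x * ψ b) ^ 2 / 2 := by
      apply abs_le.mpr
      constructor
      · have := exp_quad (x * ψ b) ht; nlinarith
      · have := one_sub_exp_le (x * ψ b); nlinarith
    rw [Real.norm_eq_abs, neg_mul, abs_div, abs_mul, abs_of_nonneg hψ,
      abs_of_nonneg (by positivity : (0:ℝ) ≤ x ^ 2)]
    rw [div_le_iff₀ (by positivity)]
    calc ψ b * |1 - Real.exp (-(x * ψ b)) - x * ψ b|
        ≤ ψ b * ((x * ψ b) ^ 2 / 2) := mul_le_mul_of_nonneg_left habs hψ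
      _ = ψ b ^ 3 / 2 * x ^ 2 := by ring
  · exact hint3.div_const 2
  · filter_upwards [ae_restrict_mem measurableSet_Ioc] with b hb
    have hψ : 0 < ψ b := hpos b hb
    apply tendsto_of_tendsto_of_tendsto_of_le_of_le'
      (g := fun _ : ℝ => -(ψ b ^ 3) / 2) (h := fun x : ℝ => -(ψ b ^ 3) / 2 + x * ψ b ^ 4 / 6)
    · exact tendsto_const_nhds
    · have : Tendsto (fun x : ℝ => -(ψ b ^ 3) / 2 + x * ψ b ^ 4 / 6) (nhds 0)
          (nhds (-(ψ b ^ 3) / 2 + 0 * ψ b ^ 4 / 6)) := by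
        apply Continuous.tendsto
        continuity
      simpa using this.mono_left nhdsWithin_le_nhds
    · filter_upwards [self_mem_nhdsWithin] with x hx
      have hx0 : (0:ℝ) < x := hx
      have ht : 0 ≤ x * ψ b := by positivity
      have := exp_quad (x * ψ b) ht
      rw [neg_mul, le_div_iff₀ (by positivity : (0:ℝ) < x ^ 2)]
      nlinarith
    · filter_upwards [self_mem_nhdsWithin] with x hx
      have hx0 : (0:ℝ) < x := hx
      have ht : 0 ≤ x * ψ b := by positivity
      have := exp_cubic (x * ψ b) ht
      rw [neg_mul, div_le_iff₀ (by positivity : (0:ℝ) < x ^ 2)]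
      nlinarith

private lemma meas_rpow_const (c : ℝ) : Measurable fun x : ℝ => x ^ c := by
  measurability

private lemma rpow_int_val (r : ℝ) (hr : -1 < r) :
    ∫ x in (0:ℝ)..1, x ^ r = 1/(r+1) := by
  rw [integral_rpow (Or.inl hr), Real.one_rpow,
    Real.zero_rpow (by linarith)]
  norm_num

/-- For `γ > 4`, `ψ(x) = x^(-1/(γ-1))`,
`g(x) = ∫₀¹ ψ(b)(1 - exp(-x ψ(b))) db`, `θ_c = 1/∫₀¹ ψ²`, and `A θ` the unique
positive solution of `A = θ g(A)` for `θ > θ_c`: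
`A_θ ∼ (2 ∫₀¹ ψ²)/(θ_c ∫₀¹ ψ³) · (θ - θ_c)` as `θ ↓ θ_c`; in particular
`A_θ/(θ - θ_c)` converges to a finite positive constant. -/
theorem chungLu_A_asymptotics_supercritical (γ : ℝ) (hγ : 4 < γ)
    (ψ g A : ℝ → ℝ) (θc : ℝ)
    (hψ : ∀ x, ψ x = x ^ (-(1 / (γ - 1))))
    (hg : ∀ x, g x = ∫ b in (0:ℝ)..1, ψ b * (1 - Real.exp (-x * ψ b)))
    (hθc : θc = 1 / ∫ x in (0:ℝ)..1, (ψ x) ^ 2)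
    (hA : ∀ θ : ℝ, θc < θ →
      0 < A θ ∧ A θ = θ * g (A θ) ∧
        ∀ A' : ℝ, 0 < A' → A' = θ * g A' → A' = A θ) :
    Tendsto
      (fun θ => A θ /
        ((2 * ∫ x in (0:ℝ)..1, (ψ x) ^ 2) / (θc * ∫ x in (0:ℝ)..1, (ψ x) ^ 3)
          * (θ - θc)))
      (nhdsWithin θc (Ioi θc)) (nhds 1)
    ∧ 0 < (2 * ∫ x in (0:ℝ)..1, (ψ x) ^ 2) / (θc * ∫ x in (0:ℝ)..1, (ψ x) ^ 3)
    ∧ Tendsto (fun θ => A θ / (θ - θc)) (nhdsWithin θc (Ioi θc))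
        (nhds ((2 * ∫ x in (0:ℝ)..1, (ψ x) ^ 2) /
          (θc * ∫ x in (0:ℝ)..1, (ψ x) ^ 3))) := by
  have hγ1 : (0:ℝ) < γ - 1 := by linarith
  have hγ3 : (0:ℝ) < γ - 3 := by linarith
  have hγ4 : (0:ℝ) < γ - 4 := by linarith
  -- basic facts on ψ
  have hmeas : Measurable ψ := by
    have : ψ = fun x => x ^ (-(1 / (γ - 1))) := funext hψ
    rw [this]
    exact meas_rpow_const _
  have hpos : ∀ b ∈ Ioc (0:ℝ) 1, 0 < ψ b := by
    intro b hb
    rw [hψ b]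
    exact Real.rpow_pos_of_pos hb.1 _
  -- rewriting powers of ψ
  have hpow : ∀ (n : ℕ), ∀ x : ℝ, 0 ≤ x → ψ x ^ n = x ^ (-(n / (γ - 1)) : ℝ) := by
    intro n x hx
    rw [hψ x, ← Real.rpow_natCast (x ^ (-(1 / (γ - 1)))) n, ← Real.rpow_mul hx]
    congr 1
    ring
  have hexp2 : (-1:ℝ) < -(2 / (γ - 1)) := by
    have : (2:ℝ) / (γ - 1) < 1 := (div_lt_one hγ1).mpr (by linarith)
    linarith
  have hexp3 : (-1:ℝ) < -(3 / (γ - 1)) := by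
    have : (3:ℝ) / (γ - 1) < 1 := (div_lt_one hγ1).mpr (by linarith)
    linarith
  -- integrability
  have hint2 : IntegrableOn (fun b => ψ b ^ 2) (Ioc (0:ℝ) 1) := by
    apply ((intervalIntegral.intervalIntegrable_rpow' (a := 0) (b := 1) hexp2).1).congr_fun
    · intro x hx
      exact (hpow 2 x hx.1.le).symm
    · exact measurableSet_Ioc
  have hint3 : IntegrableOn (fun b => ψ b ^ 3) (Ioc (0:ℝ) 1) := by
    apply ((intervalIntegral.intervalIntegrable_rpow' (a := 0) (b := 1) hexp3).1).congr_fun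
    · intro x hx
      exact (hpow 3 x hx.1.le).symm
    · exact measurableSet_Ioc
  -- values of the integrals
  set I2 : ℝ := ∫ x in (0:ℝ)..1, (ψ x) ^ 2 with hI2def
  set I3 : ℝ := ∫ x in (0:ℝ)..1, (ψ x) ^ 3 with hI3def
  have hI2val : I2 = (γ - 1) / (γ - 3) := by
    rw [hI2def]
    have hcong : EqOn (fun x => (ψ x) ^ 2) (fun x => x ^ (-(2 / (γ - 1)) : ℝ))
        (uIcc (0:ℝ) 1) := by
      intro x hx
      rw [uIcc_of_le (by norm_num : (0:ℝ) ≤ 1)] at hx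
      exact hpow 2 x hx.1
    rw [intervalIntegral.integral_congr hcong, rpow_int_val _ hexp2]
    have hX : -(2/(γ-1)) + 1 = (γ-3)/(γ-1) := by field_simp [hγ1.ne']; ring
    rw [hX, one_div_div]
  have hI3val : I3 = (γ - 1) / (γ - 4) := by
    rw [hI3def]
    have hcong : EqOn (fun x => (ψ x) ^ 3) (fun x => x ^ (-(3 / (γ - 1)) : ℝ))
        (uIcc (0:ℝ) 1) := by
      intro x hx
      rw [uIcc_of_le (by norm_num : (0:ℝ) ≤ 1)] at hx
      exact hpow 3 x hx.1
    rw [intervalIntegral.integral_congr hcong, rpow_int_val _ hexp3]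
    have hX : -(3/(γ-1)) + 1 = (γ-4)/(γ-1) := by field_simp [hγ1.ne']; ring
    rw [hX, one_div_div]
  have hI2pos : 0 < I2 := by rw [hI2val]; positivity
  have hI3pos : 0 < I3 := by rw [hI3val]; positivity
  have hθcpos : 0 < θc := by rw [hθc]; positivity
  have hθcI2 : θc * I2 = 1 := by
    rw [hθc]
    field_simp
  -- interval integrals as set integrals
  have hJ2 : (∫ b in Ioc (0:ℝ) 1, ψ b ^ 2) = I2 := by
    rw [hI2def, intervalIntegral.integral_of_le (by norm_num : (0:ℝ) ≤ 1)]
  have hJ3 : (∫ b in Ioc (0:ℝ) 1, ψ b ^ 3) = I3 := by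
    rw [hI3def, intervalIntegral.integral_of_le (by norm_num : (0:ℝ) ≤ 1)]
  have hgG : ∀ x, g x = Gnu ψ x := by
    intro x
    rw [hg x, Gnu, intervalIntegral.integral_of_le (by norm_num : (0:ℝ) ≤ 1)]
  -- A θ → 0 as θ ↓ θc
  have hA0 : Tendsto A (nhdsWithin θc (Ioi θc)) (nhds 0) := by
    rw [tendsto_order]
    constructor
    · intro l hl
      filter_upwards [self_mem_nhdsWithin] with θ hθ
      exact lt_trans hl (hA θ hθ).1
    · intro u hu
      set q : ℝ := Gnu ψ u / u with hq
      have hGu : Gnu ψ u < u * (∫ b in Ioc (0:ℝ) 1, ψ b ^ 2) :=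
        G_lt_gap ψ hmeas hpos hint2 u hu
      rw [hJ2] at hGu
      have hqlt : q < I2 := by
        rw [hq, div_lt_iff₀ hu]
        linarith [hGu]
      have hθcq : θc * q < 1 := by
        calc θc * q < θc * I2 := by exact mul_lt_mul_of_pos_left hqlt hθcpos
          _ = 1 := hθcI2
      have hev : ∀ᶠ θ in nhds θc, θ * q < 1 := by
        apply Tendsto.eventually_lt_const hθcq
        exact (continuous_id.mul continuous_const).tendsto θc
      filter_upwards [self_mem_nhdsWithin, eventually_nhdsWithin_of_eventually_nhds hev]
        with θ hθ hθq
      by_contra hcon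
      push_neg at hcon
      obtain ⟨hApos, hAeq, _⟩ := hA θ hθ
      have hθpos : 0 < θ := lt_trans hθcpos hθ
      have hmono := G_mono ψ hmeas hpos hint2 u (A θ) hu hcon
      have hGA : Gnu ψ (A θ) = A θ / θ := by
        rw [hgG] at hAeq
        field_simp
        linarith [hAeq]
      rw [hGA] at hmono
      -- u * (A θ / θ) ≤ A θ * Gnu ψ u
      have h1 : u * A θ ≤ θ * (A θ * Gnu ψ u) := by
        have := mul_le_mul_of_nonneg_right hmono hθpos.le
        calc u * A θ = u * (A θ / θ) * θ := by field_simp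
          _ ≤ A θ * Gnu ψ u * θ := this
          _ = θ * (A θ * Gnu ψ u) := by ring
      have h2 : u ≤ θ * Gnu ψ u := by nlinarith
      have h3 : 1 ≤ θ * q := by
        rw [hq, mul_div_assoc'] at *
        rw [le_div_iff₀ hu]
        linarith
      linarith
  have hAtend : Tendsto A (nhdsWithin θc (Ioi θc)) (nhdsWithin 0 (Ioi 0)) := by
    rw [tendsto_nhdsWithin_iff]
    refine ⟨hA0, ?_⟩
    filter_upwards [self_mem_nhdsWithin] with θ hθ
    exact (hA θ hθ).1
  -- limit of Phinu along A
  have hI3half : (∫ b in Ioc (0:ℝ) 1, -(ψ b ^ 3) / 2) = -(I3) / 2 := by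
    rw [integral_div, integral_neg, hJ3]
  have hPhiA : Tendsto (fun θ => Phinu ψ (A θ)) (nhdsWithin θc (Ioi θc))
      (nhds (-(I3) / 2)) := by
    rw [← hI3half]
    exact (Phi_tendsto ψ hmeas hpos hint3).comp hAtend
  -- the key identity
  have hkey : ∀ θ, θc < θ →
      θ * Phinu ψ (A θ) ≠ 0 ∧ A θ / (θ - θc) = -I2 / (θ * Phinu ψ (A θ)) := by
    intro θ hθ
    obtain ⟨hApos, hAeq, _⟩ := hA θ hθ
    have hθpos : 0 < θ := lt_trans hθcpos hθ
    have hid := Phi_identity ψ hmeas hpos hint2 (A θ) hApos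
    rw [hJ2] at hid
    rw [hgG] at hAeq
    have hGA : Gnu ψ (A θ) = A θ / θ := by
      field_simp
      linarith [hAeq]
    rw [hGA] at hid
    -- A θ ^ 2 * Φ = A θ / θ - A θ * I2
    have hmain : A θ * (θ * Phinu ψ (A θ)) = -I2 * (θ - θc) := by
      have hdiv : θ * (A θ / θ) = A θ := by field_simp
      have h1 : θ * (A θ ^ 2 * Phinu ψ (A θ)) = A θ - θ * (A θ * I2) := by
        rw [hid, mul_sub, hdiv]
      have h2 : A θ * (A θ * (θ * Phinu ψ (A θ))) = A θ * (-I2 * (θ - θc)) := by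
        linear_combination h1 - A θ * hθcI2
      exact mul_left_cancel₀ (ne_of_gt hApos) h2
    have hrhs : -I2 * (θ - θc) ≠ 0 := by
      have : 0 < θ - θc := by linarith
      have : I2 * (θ - θc) > 0 := by positivity
      intro hcontra
      nlinarith
    have hD : θ * Phinu ψ (A θ) ≠ 0 := by
      intro h0
      rw [h0, mul_zero] at hmain
      exact hrhs hmain.symm
    refine ⟨hD, ?_⟩
    have hne : θ - θc ≠ 0 := sub_ne_zero.mpr (ne_of_gt hθ)
    rw [div_eq_div_iff hne hD]
    linarith [hmain]
  -- third component
  have hlim3 : Tendsto (fun θ => A θ / (θ - θc)) (nhdsWithin θc (Ioi θc))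
      (nhds (2 * I2 / (θc * I3))) := by
    have hDlim : Tendsto (fun θ => θ * Phinu ψ (A θ)) (nhdsWithin θc (Ioi θc))
        (nhds (θc * (-(I3) / 2))) := by
      exact (tendsto_id.mono_left nhdsWithin_le_nhds).mul hPhiA
    have hDne : θc * (-(I3) / 2) ≠ 0 := by
      intro h
      have : θc * I3 > 0 := by positivity
      nlinarith
    have hq : Tendsto (fun θ => -I2 / (θ * Phinu ψ (A θ))) (nhdsWithin θc (Ioi θc))
        (nhds (-I2 / (θc * (-(I3) / 2)))) :=
      tendsto_const_nhds.div hDlim hDne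
    have hval : -I2 / (θc * (-(I3) / 2)) = 2 * I2 / (θc * I3) := by
      rw [div_eq_div_iff hDne (by positivity)]
      ring
    rw [hval] at hq
    apply hq.congr'
    filter_upwards [self_mem_nhdsWithin] with θ hθ
    exact ((hkey θ hθ).2).symm
  have hcpos : 0 < 2 * I2 / (θc * I3) := by positivity
  refine ⟨?_, hcpos, hlim3⟩
  -- first component
  have heq : (fun θ => A θ / (2 * I2 / (θc * I3) * (θ - θc)))
      = fun θ => (A θ / (θ - θc)) / (2 * I2 / (θc * I3)) := by
    funext θ
    rw [div_div]
    ring_nf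
  rw [heq]
  have := hlim3.div_const (2 * I2 / (θc * I3))
  rwa [div_self (ne_of_gt hcpos)] at this
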